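/- Let A be a commutative ring, n a positive integer, and U a multiplicatively closed subset of A[X] containing 1. Let W be the multiplicatively closed subset of A[X_1, …, X_n] generated by {f(X_i) : f ∈ U, 1 ≤ i ≤ n}; W is stable under the action of the symmetric group S_n permuting the variables, so the S_n-action extends to the localization of A[X_1, …, X_n] at W (which is identified with ⊗_A^n A[X]_U). Then the canonical map from the localization of the symmetric subalgebra of A[X_1, …, X_n] at U(n) = {∏_{i=1}^n f(X_i) : f ∈ U} to the localization of A[X_1, …, X_n] at W is injective, and its image is exactly the subalgebra of S_n-invariant elements; that is, (⊗_A^{(n)} A[X])_{U(n)} ≅ ⊗_A^{(n)} (A[X]_U). -/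

import Mathlib

open MvPolynomial

set_option synthInstance.maxHeartbeats 1000000
set_option maxHeartbeats 1000000

section Scaffold

variable {A : Type*} [CommRing A] {n : ℕ}

/-- Substituting `X_j ↦ f(X_j)` into a symmetric polynomial yields a symmetric polynomial. -/
theorem subst_isSymmetric (f : Polynomial A)
    {p : MvPolynomial (Fin n) A} (hp : p.IsSymmetric) :
    (MvPolynomial.aeval
      (fun j => Polynomial.aeval (MvPolynomial.X j : MvPolynomial (Fin n) A) f) p).IsSymmetric := by
  intro e
  have h1 : (rename e) ((MvPolynomial.aeval
        (fun j => Polynomial.aeval (MvPolynomial.X j : MvPolynomial (Fin n) A) f)) p)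
      = MvPolynomial.aeval
        (fun j => Polynomial.aeval (MvPolynomial.X (e j) : MvPolynomial (Fin n) A) f) p := by
    rw [← AlgHom.comp_apply, comp_aeval]
    congr 1
    congr 1
    funext j
    rw [← Polynomial.aeval_algHom_apply (rename (R := A) e) (MvPolynomial.X j) f, rename_X]
  rw [h1]
  have h2 : (fun j => Polynomial.aeval (MvPolynomial.X (e j) : MvPolynomial (Fin n) A) f)
      = (fun j => Polynomial.aeval (MvPolynomial.X j : MvPolynomial (Fin n) A) f) ∘ e := rfl
  rw [h2, ← aeval_rename, hp e]

/-- `∏_{i=1}^n f(X_i)` as an element of the symmetric subalgebra of `A[X_1, …, X_n]`. -/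
noncomputable def prodSubst (f : Polynomial A) : symmetricSubalgebra (Fin n) A :=
  ⟨∏ i : Fin n, Polynomial.aeval (MvPolynomial.X i : MvPolynomial (Fin n) A) f,
   (mem_symmetricSubalgebra _).2 (by
      have h : (∏ i : Fin n, Polynomial.aeval (MvPolynomial.X i : MvPolynomial (Fin n) A) f)
          = MvPolynomial.aeval (R := A)
              (fun j => Polynomial.aeval (MvPolynomial.X j : MvPolynomial (Fin n) A) f)
              (∏ i : Fin n, MvPolynomial.X i) := by
        rw [map_prod]
        simp
      rw [h]
      exact subst_isSymmetric f (by
        intro e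
        rw [map_prod]
        simp only [rename_X]
        exact Equiv.prod_comp e _))⟩

/-- The multiplicative set `U(n) = {∏_{i=1}^n f(X_i) : f ∈ U}` inside the symmetric
subalgebra of `A[X_1, …, X_n]`. -/
noncomputable def Un (U : Submonoid (Polynomial A)) (n : ℕ) :
    Submonoid (symmetricSubalgebra (Fin n) A) where
  carrier := {x | ∃ f ∈ U, x = prodSubst f}
  one_mem' := ⟨1, U.one_mem, Subtype.ext (by simp [prodSubst])⟩
  mul_mem' := by
    rintro x y ⟨f, hf, rfl⟩ ⟨g, hg, rfl⟩
    exact ⟨f * g, U.mul_mem hf hg,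
      Subtype.ext (by simp [prodSubst, map_mul, Finset.prod_mul_distrib])⟩

end Scaffold


variable {A : Type*} [CommRing A] {n : ℕ}

/-- The multiplicative set of `A[X_1, …, X_n]` generated by `{f(X_i) : f ∈ U, i}`. -/
noncomputable def Wgen (U : Submonoid (Polynomial A)) (n : ℕ) :
    Submonoid (MvPolynomial (Fin n) A) :=
  Submonoid.closure
    {x | ∃ f ∈ U, ∃ i : Fin n, x = Polynomial.aeval (MvPolynomial.X i : MvPolynomial (Fin n) A) f}

/-- `W` is stable under the `S_n`-action permuting the variables. -/
theorem Wgen_stable (U : Submonoid (Polynomial A)) (σ : Equiv.Perm (Fin n)) :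
    Wgen U n ≤ (Wgen U n).comap ((rename (σ : Fin n → Fin n)).toRingHom :
      MvPolynomial (Fin n) A →+* MvPolynomial (Fin n) A) := by
  rw [Wgen, Submonoid.closure_le]
  rintro x ⟨f, hf, i, rfl⟩
  refine Submonoid.mem_comap.2 (Submonoid.subset_closure ⟨f, hf, σ i, ?_⟩)
  show (rename (σ : Fin n → Fin n))
      (Polynomial.aeval (MvPolynomial.X i : MvPolynomial (Fin n) A) f) = _
  rw [← Polynomial.aeval_algHom_apply (rename (R := A) (σ : Fin n → Fin n))
    (MvPolynomial.X i) f, rename_X]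

/-- The extension to `(⊗_A^n A[X])_U` of the `S_n`-action permuting the variables. -/
noncomputable def actionMap (U : Submonoid (Polynomial A)) (n : ℕ) (σ : Equiv.Perm (Fin n)) :
    Localization (Wgen U n) →+* Localization (Wgen U n) :=
  IsLocalization.map (M := Wgen U n) (T := Wgen U n) (Localization (Wgen U n))
    ((rename (σ : Fin n → Fin n)).toRingHom :
      MvPolynomial (Fin n) A →+* MvPolynomial (Fin n) A)
    (Wgen_stable U σ)

theorem Un_le_comap (U : Submonoid (Polynomial A)) (n : ℕ) :
    Un U n ≤ (Wgen U n).comap ((symmetricSubalgebra (Fin n) A).subtype) := by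
  rintro x ⟨f, hf, rfl⟩
  refine Submonoid.mem_comap.2 ?_
  show (∏ i : Fin n, Polynomial.aeval (MvPolynomial.X i : MvPolynomial (Fin n) A) f) ∈ Wgen U n
  refine Submonoid.prod_mem _ fun i _ => Submonoid.subset_closure ?_
  exact ⟨f, hf, i, rfl⟩

/-- The canonical map `(⊗_A^{(n)} A[X])_{U(n)} → ⊗_A^n (A[X]_U)`, i.e. the map induced on
localizations by the inclusion of the symmetric subalgebra into `A[X_1, …, X_n]`. -/
noncomputable def canonicalLocMap (U : Submonoid (Polynomial A)) (n : ℕ) :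
    Localization (Un U n) →+* Localization (Wgen U n) :=
  IsLocalization.map (M := Un U n) (T := Wgen U n) (Localization (Wgen U n))
    ((symmetricSubalgebra (Fin n) A).subtype)
    (Un_le_comap U n)

theorem prodSubst_coe (f : Polynomial A) :
    ((prodSubst f : symmetricSubalgebra (Fin n) A) : MvPolynomial (Fin n) A)
      = ∏ i : Fin n, Polynomial.aeval (MvPolynomial.X i : MvPolynomial (Fin n) A) f := rfl

theorem prodSubst_mem_Wgen (U : Submonoid (Polynomial A)) {g : Polynomial A} (hg : g ∈ U) :
    ((prodSubst g : symmetricSubalgebra (Fin n) A) : MvPolynomial (Fin n) A) ∈ Wgen U n :=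
  Un_le_comap U n ⟨g, hg, rfl⟩

theorem wgen_dvd (U : Submonoid (Polynomial A)) {w : MvPolynomial (Fin n) A}
    (hw : w ∈ Wgen U n) :
    ∃ g ∈ U, ∃ r : MvPolynomial (Fin n) A,
      w * r = ((prodSubst g : symmetricSubalgebra (Fin n) A) : MvPolynomial (Fin n) A) := by
  induction hw using Submonoid.closure_induction with
  | mem x hx =>
    obtain ⟨f, hf, i, rfl⟩ := hx
    refine ⟨f, hf, ∏ j ∈ Finset.univ.erase i,
      Polynomial.aeval (MvPolynomial.X j : MvPolynomial (Fin n) A) f, ?_⟩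
    exact Finset.mul_prod_erase Finset.univ
      (fun j => Polynomial.aeval (MvPolynomial.X j : MvPolynomial (Fin n) A) f)
      (Finset.mem_univ i)
  | one => exact ⟨1, U.one_mem, 1, by simp [prodSubst_coe]⟩
  | mul x y hx hy ihx ihy =>
    obtain ⟨g1, hg1, r1, h1⟩ := ihx
    obtain ⟨g2, hg2, r2, h2⟩ := ihy
    refine ⟨g1 * g2, U.mul_mem hg1 hg2, r1 * r2, ?_⟩
    have hp : ((prodSubst (g1 * g2) : symmetricSubalgebra (Fin n) A) : MvPolynomial (Fin n) A)
        = ((prodSubst g1 : symmetricSubalgebra (Fin n) A) : MvPolynomial (Fin n) A)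
          * ((prodSubst g2 : symmetricSubalgebra (Fin n) A) : MvPolynomial (Fin n) A) := by
      simp only [prodSubst_coe, map_mul, Finset.prod_mul_distrib]
    rw [hp, ← h1, ← h2]; ring

theorem rename_symmSub (σ : Equiv.Perm (Fin n)) (p : symmetricSubalgebra (Fin n) A) :
    rename (σ : Fin n → Fin n) (p : MvPolynomial (Fin n) A) = p :=
  (mem_symmetricSubalgebra _).1 p.2 σ

theorem prodSubst_coe_prod {ι : Type*} (s : Finset ι) (g : ι → Polynomial A) :
    ((prodSubst (∏ σ ∈ s, g σ) : symmetricSubalgebra (Fin n) A) : MvPolynomial (Fin n) A)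
      = ∏ σ ∈ s,
        ((prodSubst (g σ) : symmetricSubalgebra (Fin n) A) : MvPolynomial (Fin n) A) := by
  simp only [prodSubst_coe, map_prod]
  rw [Finset.prod_comm]

theorem actionMap_comp (U : Submonoid (Polynomial A)) (n : ℕ) (σ : Equiv.Perm (Fin n)) :
    (actionMap U n σ).comp (canonicalLocMap U n) = canonicalLocMap U n := by
  apply IsLocalization.ringHom_ext (Un U n)
  ext p
  simp only [RingHom.comp_apply]
  rw [canonicalLocMap, IsLocalization.map_eq, actionMap, IsLocalization.map_eq]
  congr 1
  exact rename_symmSub σ p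

/-- The canonical map `(⊗_A^{(n)} A[X])_{U(n)} → ⊗_A^n (A[X]_U)` is injective, and its image
is exactly the subring of `S_n`-invariant elements; that is,
`(⊗_A^{(n)} A[X])_{U(n)} ≅ ⊗_A^{(n)} (A[X]_U)`. -/
theorem canonicalLocMap_injective_range_invariants (U : Submonoid (Polynomial A)) (n : ℕ) :
    Function.Injective (canonicalLocMap U n)
    ∧ Set.range (canonicalLocMap U n)
        = {x : Localization (Wgen U n) | ∀ σ : Equiv.Perm (Fin n), actionMap U n σ x = x} := by
  constructor
  · rw [injective_iff_map_eq_zero]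
    intro x hx
    obtain ⟨⟨p, s⟩, rfl⟩ := IsLocalization.mk'_surjective (Un U n) x
    rw [canonicalLocMap, IsLocalization.map_mk'] at hx
    rw [IsLocalization.mk'_eq_zero_iff] at hx ⊢
    obtain ⟨⟨c, hc⟩, hcp⟩ := hx
    obtain ⟨g, hg, r, hr⟩ := wgen_dvd U hc
    refine ⟨⟨prodSubst g, g, hg, rfl⟩, ?_⟩
    apply Subtype.ext
    show ((prodSubst g : symmetricSubalgebra (Fin n) A) : MvPolynomial (Fin n) A)
      * (p : MvPolynomial (Fin n) A) = 0
    have hcp' : c * (p : MvPolynomial (Fin n) A) = 0 := hcp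
    rw [← hr]
    linear_combination r * hcp'
  · apply Set.Subset.antisymm
    · rintro _ ⟨y, rfl⟩ σ
      rw [← RingHom.comp_apply, actionMap_comp]
    · intro x hx
      obtain ⟨⟨q, w⟩, rfl⟩ := IsLocalization.mk'_surjective (Wgen U n) x
      dsimp only at hx ⊢
      obtain ⟨g, hg, r, hr⟩ := wgen_dvd U w.2
      set s : Wgen U n := ⟨_, prodSubst_mem_Wgen U (n := n) hg⟩ with hs
      set q' : MvPolynomial (Fin n) A := q * r with hq'
      have hxq : IsLocalization.mk' (Localization (Wgen U n)) q w
          = IsLocalization.mk' (Localization (Wgen U n)) q' s := by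
        rw [IsLocalization.mk'_eq_iff_eq]
        congr 1
        rw [hs, hq']
        show ((prodSubst g : symmetricSubalgebra (Fin n) A) : MvPolynomial (Fin n) A) * q
          = (w : MvPolynomial (Fin n) A) * (q * r)
        rw [← hr]; ring
      rw [hxq] at hx ⊢
      have key : ∀ σ : Equiv.Perm (Fin n), ∃ gσ ∈ U,
          ((prodSubst gσ : symmetricSubalgebra (Fin n) A) : MvPolynomial (Fin n) A)
            * rename (σ : Fin n → Fin n) q'
          = ((prodSubst gσ : symmetricSubalgebra (Fin n) A) : MvPolynomial (Fin n) A) * q' := by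
        intro σ
        have h1 := hx σ
        rw [actionMap, IsLocalization.map_mk'] at h1
        have hsym : ((rename (σ : Fin n → Fin n)).toRingHom :
            MvPolynomial (Fin n) A →+* MvPolynomial (Fin n) A) (s : MvPolynomial (Fin n) A)
            = (s : MvPolynomial (Fin n) A) := rename_symmSub σ (prodSubst g)
        rw [IsLocalization.mk'_eq_iff_eq] at h1
        rw [IsLocalization.eq_iff_exists (Wgen U n)] at h1
        obtain ⟨c, hc⟩ := h1
        simp only [hsym] at hc
        obtain ⟨g2, hg2, r2, hr2⟩ := wgen_dvd U (mul_mem c.2 s.2)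
        refine ⟨g2, hg2, ?_⟩
        rw [← hr2]
        have : (c : MvPolynomial (Fin n) A) * ((s : MvPolynomial (Fin n) A)
            * rename (σ : Fin n → Fin n) q')
            = (c : MvPolynomial (Fin n) A) * ((s : MvPolynomial (Fin n) A) * q') := hc
        linear_combination r2 * this
      choose G hGU hG using key
      set h : Polynomial A := ∏ σ : Equiv.Perm (Fin n), G σ with hh
      have hhU : h ∈ U := Submonoid.prod_mem U fun σ _ => hGU σ
      set t : MvPolynomial (Fin n) A :=
        ((prodSubst h : symmetricSubalgebra (Fin n) A) : MvPolynomial (Fin n) A) with ht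
      have htprod : t = ∏ σ : Equiv.Perm (Fin n),
          ((prodSubst (G σ) : symmetricSubalgebra (Fin n) A) : MvPolynomial (Fin n) A) := by
        rw [ht, hh, prodSubst_coe_prod]
      have htfix : ∀ σ : Equiv.Perm (Fin n),
          t * rename (σ : Fin n → Fin n) q' = t * q' := by
        intro σ
        rw [htprod, ← Finset.mul_prod_erase _ _ (Finset.mem_univ σ)]
        have := hG σ
        linear_combination (∏ τ ∈ Finset.univ.erase σ,
          ((prodSubst (G τ) : symmetricSubalgebra (Fin n) A) : MvPolynomial (Fin n) A)) * this
      have htsym : (t * q').IsSymmetric := by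
        intro σ
        rw [map_mul]
        rw [show rename (σ : Fin n → Fin n) t = t from rename_symmSub σ (prodSubst h)]
        exact htfix σ
      refine ⟨IsLocalization.mk' (Localization (Un U n))
        (⟨t * q', (mem_symmetricSubalgebra _).2 htsym⟩ : symmetricSubalgebra (Fin n) A)
        (⟨prodSubst h * prodSubst g,
          Submonoid.mul_mem _ ⟨h, hhU, rfl⟩ ⟨g, hg, rfl⟩⟩ : Un U n), ?_⟩
      rw [canonicalLocMap, IsLocalization.map_mk']
      rw [IsLocalization.mk'_eq_iff_eq]
      congr 1
      show (s : MvPolynomial (Fin n) A) * (t * q')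
        = (((prodSubst h : symmetricSubalgebra (Fin n) A) : MvPolynomial (Fin n) A)
            * ((prodSubst g : symmetricSubalgebra (Fin n) A) : MvPolynomial (Fin n) A)) * q'
      push_cast
      rw [← ht]
      ring
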